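/- If δ is a σ-derivation of R with δ(R) ⊆ I and δ(I) ⊆ I² for a σ-stable two-sided ideal I with σ(I) = I, then δ is σ-nilpotent: for every n ≥ 1 there exists m ≥ 1 such that M(δ, σ)(R) ⊆ I^n for every noncommutative monomial M in δ and σ containing at least m factors δ. -/
import Mathlib


universe u

/-- The monomial in `δ` and `σ` determined by a list of booleans
(`true` stands for a factor `δ`, `false` for a factor `σ`). -/
def monomialMap {R : Type u} (σ δ : R → R) (l : List Bool) : R → R :=
  (l.map fun b => if b then δ else σ).foldr (· ∘ ·) id

/-- if `δ(R) ⊆ I` and `δ(I) ⊆ I²` for a two-sided ideal `I` with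
`σ(I) = I`, then `δ` is `σ`-nilpotent: for every `n ≥ 1` there is `m ≥ 1` such that
every noncommutative monomial in `δ, σ` with at least `m` factors `δ` maps `R` into `Iⁿ`. -/
theorem sigma_derivation_is_sigma_nilpotent (R : Type u) [Ring R] (σ : R →+* R) (δ : R →+ R)
    (hδ : ∀ a b : R, δ (a * b) = σ a * δ b + δ a * b)
    (I : Ideal R) (hIright : ∀ a b : R, a ∈ I → a * b ∈ I)
    (hσI : σ '' (I : Set R) = (I : Set R))
    (hδR : ∀ r : R, δ r ∈ I)
    (hδI : ∀ a : R, a ∈ I → δ a ∈ I ^ 2) :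
    ∀ n : ℕ, 1 ≤ n → ∃ m : ℕ, 1 ≤ m ∧
      ∀ l : List Bool, m ≤ l.count true →
        ∀ r : R, monomialMap (σ : R → R) (δ : R → R) l r ∈ I ^ n := by
  -- σ maps I into I
  have hσ : ∀ a : R, a ∈ I → σ a ∈ I := by
    intro a ha
    have : σ a ∈ σ '' (I : Set R) := ⟨a, ha, rfl⟩
    rwa [hσI] at this
  -- σ maps I^k into I^k
  have hσpow : ∀ k : ℕ, ∀ a : R, a ∈ I ^ k → σ a ∈ I ^ k := by
    intro k
    induction k with
    | zero => intro a _; simp [Submodule.pow_zero, Ideal.one_eq_top]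
    | succ k ih =>
      intro a ha
      rw [Submodule.pow_succ] at ha ⊢
      refine Submodule.mul_induction_on ha ?_ ?_
      · intro x hx y hy
        rw [map_mul]
        exact Submodule.mul_mem_mul (ih x hx) (hσ y hy)
      · intro x y hx hy
        rw [map_add]
        exact add_mem hx hy
  -- multiplication of positive powers
  have hmulpow : ∀ j k : ℕ, I ^ (j + 1) * I ^ (k + 1) = I ^ (j + k + 2) := by
    intro j k
    induction k with
    | zero =>
      rw [Submodule.pow_one, ← Submodule.pow_succ]
    | succ k ih =>
      rw [show j + (k + 1) + 2 = j + k + 2 + 1 by ring,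
        show I ^ (k + 1 + 1) = I ^ (k + 1) * I from Submodule.pow_succ I,
        ← mul_assoc, ih, ← Submodule.pow_succ]
  have hcomm : ∀ k : ℕ, I * I ^ (k + 1) = I ^ (k + 2) := by
    intro k
    have := hmulpow 0 k
    rwa [Submodule.pow_one, Nat.zero_add] at this
  -- δ maps I^(k+1) into I^(k+2)
  have hδpow : ∀ k : ℕ, ∀ a : R, a ∈ I ^ (k + 1) → δ a ∈ I ^ (k + 2) := by
    intro k
    induction k with
    | zero =>
      intro a ha
      rw [Submodule.pow_one] at ha
      exact hδI a ha
    | succ k ih =>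
      intro a ha
      rw [show I ^ (k + 1 + 1) = I ^ (k + 1) * I from Submodule.pow_succ I] at ha
      refine Submodule.mul_induction_on ha ?_ ?_
      · intro x hx y hy
        rw [hδ x y]
        refine add_mem ?_ ?_
        · have h1 : σ x * δ y ∈ I ^ (k + 1) * I ^ 2 :=
            Submodule.mul_mem_mul (hσpow _ _ hx) (hδI y hy)
          have h2 : I ^ (k + 1) * I ^ 2 = I ^ (k + 3) := hmulpow k 1
          rw [h2] at h1
          exact h1
        · have h1 : δ x * y ∈ I ^ (k + 2) * I :=
            Submodule.mul_mem_mul (ih x hx) hy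
          rwa [← Submodule.pow_succ] at h1
      · intro x y hx hy
        rw [map_add]
        exact add_mem hx hy
  -- positive powers of I are decreasing
  have hdesc : ∀ k n : ℕ, I ^ (n + 1 + k) ≤ I ^ (n + 1) := by
    intro k
    induction k with
    | zero => intro n; exact le_rfl
    | succ k ih =>
      intro n
      have h1 : I ^ (n + 1 + (k + 1)) = I * I ^ (n + 1 + k) := by
        rw [show n + 1 + k = n + k + 1 by ring, hcomm (n + k),
          show n + 1 + (k + 1) = n + k + 2 by ring]
      rw [h1]
      refine le_trans ?_ (ih n)
      refine Submodule.mul_le.2 fun x hx y hy => ?_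
      simpa [smul_eq_mul] using Submodule.smul_mem (I ^ (n + 1 + k)) x hy
  have hpow_le : ∀ m n : ℕ, 1 ≤ n → n ≤ m → I ^ m ≤ I ^ n := by
    intro m n h1 h
    obtain ⟨n', rfl⟩ := Nat.exists_eq_add_of_le h1
    obtain ⟨k, rfl⟩ := Nat.exists_eq_add_of_le h
    have := hdesc k n'
    have he : 1 + n' = n' + 1 := Nat.add_comm _ _
    rw [show 1 + n' + k = n' + 1 + k by ring, he]
    exact this
  -- main claim
  have main : ∀ l : List Bool, ∀ r : R,
      monomialMap (σ : R → R) (δ : R → R) l r ∈ I ^ (l.count true) := by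
    intro l
    induction l with
    | nil => intro r; simp [monomialMap, Submodule.pow_zero, Ideal.one_eq_top]
    | cons b l ih =>
      intro r
      have hm : monomialMap (σ : R → R) (δ : R → R) (b :: l) r =
          (if b then (δ : R → R) else (σ : R → R))
            (monomialMap (σ : R → R) (δ : R → R) l r) := rfl
      rw [hm]
      cases b with
      | false =>
        have : (false :: l).count true = l.count true := by simp
        rw [this]
        exact hσpow _ _ (ih r)
      | true =>
        have hc : (true :: l).count true = l.count true + 1 := by simp
        rw [hc]
        cases hk : l.count true with
        | zero =>
          rw [Submodule.pow_one]
          exact hδR _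
        | succ k =>
          have h := ih r
          rw [hk] at h
          exact hδpow k _ h
  intro n hn
  refine ⟨n, hn, fun l hl r => hpow_le _ _ hn hl (main l r)⟩
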